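/- Assume: consistency of joint potential outcomes (S(ω)=s and A(ω)=a implies Y^{s,a}(ω)=Y(ω)) for (s,a) ∈ {(0,0),(0,2),(1,0)}; conditional mean exchangeability over A in the trial for (s,a)=(1,0) with trial positivity for a=0; conditional exchangeability over A in the external data for (s,a)=(0,0) and (0,2) with external treatment positivity for a=0 and a=2; external-source positivity; transportability of the conditional difference effect over S under s=0: E[Y^{0,2} − Y^{0,0} | X=x, S=1] = E[Y^{0,2} − Y^{0,0} | X=x, S=0] whenever both events have positive probability; and no causal interaction between S and A on the difference scale: E[Y^{1,2} − Y^{1,0} | X=x, S=1] = E[Y^{0,2} − Y^{0,0} | X=x, S=1] whenever P(X=x,S=1)>0 and P(X=x,S=0)>0. Then E[Y^{1,2} | S=1] = λ := γ_{0,2} + (γ_{1,0} − γ_{0,0}). -/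

import Mathlib

open Finset
open scoped Classical

noncomputable def pr {Ω : Type*} [Fintype Ω] (P : Ω → ℝ) (E : Ω → Prop) : ℝ :=
  ∑ ω, if E ω then P ω else 0

noncomputable def cexp {Ω : Type*} [Fintype Ω] (P : Ω → ℝ) (Y : Ω → ℝ) (E : Ω → Prop) : ℝ :=
  (∑ ω, if E ω then Y ω * P ω else 0) / pr P E

noncomputable def cpr {Ω : Type*} [Fintype Ω] (P : Ω → ℝ) (E F : Ω → Prop) : ℝ :=
  pr P (fun ω => E ω ∧ F ω) / pr P F

section aux
variable {Ω : Type*} [Fintype Ω]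

lemma pr_nonneg (P : Ω → ℝ) (hP : ∀ ω, 0 ≤ P ω) (E : Ω → Prop) : 0 ≤ pr P E :=
  Finset.sum_nonneg fun ω _ => by by_cases h : E ω <;> simp [h, hP ω]

lemma pr_congr (P : Ω → ℝ) {E F : Ω → Prop} (h : ∀ ω, E ω ↔ F ω) : pr P E = pr P F := by
  unfold pr; exact Finset.sum_congr rfl fun ω _ => by rw [h ω]

lemma cexp_congr (P : Ω → ℝ) (Y Z : Ω → ℝ) {E F : Ω → Prop}
    (hEF : ∀ ω, E ω ↔ F ω) (hYZ : ∀ ω, F ω → Y ω = Z ω) :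
    cexp P Y E = cexp P Z F := by
  unfold cexp
  rw [pr_congr P hEF]
  congr 1
  refine Finset.sum_congr rfl fun ω _ => ?_
  by_cases h : F ω
  · rw [if_pos ((hEF ω).mpr h), if_pos h, hYZ ω h]
  · rw [if_neg (fun hE => h ((hEF ω).mp hE)), if_neg h]

lemma cexp_sub (P : Ω → ℝ) (f g : Ω → ℝ) (E : Ω → Prop) :
    cexp P (fun ω => f ω - g ω) E = cexp P f E - cexp P g E := by
  unfold cexp
  rw [div_sub_div_same, ← Finset.sum_sub_distrib]
  refine congrArg (· / pr P E) (Finset.sum_congr rfl fun ω _ => ?_)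
  by_cases h : E ω <;> simp [h, sub_mul]

lemma num_eq_zero (P : Ω → ℝ) (hP : ∀ ω, 0 ≤ P ω) {E : Ω → Prop} (h : pr P E = 0)
    (g : Ω → ℝ) : ∑ ω, (if E ω then g ω * P ω else 0) = 0 := by
  unfold pr at h
  rw [Finset.sum_eq_zero_iff_of_nonneg (fun ω _ => by by_cases hE : E ω <;> simp [hE, hP ω])] at h
  refine Finset.sum_eq_zero fun ω _ => ?_
  by_cases hE : E ω
  · have := h ω (Finset.mem_univ ω)
    rw [if_pos hE] at this
    simp [hE, this]
  · simp [hE]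

lemma pr_pos_of_cpr_pos (P : Ω → ℝ) (hP : ∀ ω, 0 ≤ P ω) {E F : Ω → Prop}
    (h : 0 < cpr P E F) : 0 < pr P (fun ω => E ω ∧ F ω) := by
  by_contra hle
  push_neg at hle
  have : cpr P E F ≤ 0 := div_nonpos_of_nonpos_of_nonneg hle (pr_nonneg P hP F)
  linarith

lemma total_expectation (P : Ω → ℝ) (hP : ∀ ω, 0 ≤ P ω) {𝓧 : Type*} [Fintype 𝓧]
    (X : Ω → 𝓧) (E : Ω → Prop) (Y : Ω → ℝ) (hE : 0 < pr P E) :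
    cexp P Y E = ∑ x ∈ univ.filter (fun x => 0 < pr P (fun ω => X ω = x ∧ E ω)),
      cexp P Y (fun ω => X ω = x ∧ E ω) * (pr P (fun ω => X ω = x ∧ E ω) / pr P E) := by
  have hsplit : (∑ ω, if E ω then Y ω * P ω else 0)
      = ∑ x, ∑ ω, (if X ω = x ∧ E ω then Y ω * P ω else 0) := by
    rw [Finset.sum_comm]
    refine Finset.sum_congr rfl fun ω _ => ?_
    by_cases h : E ω
    · simp [h]
    · simp [h]
  have hfilter : (∑ x, ∑ ω, (if X ω = x ∧ E ω then Y ω * P ω else 0))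
      = ∑ x ∈ univ.filter (fun x => 0 < pr P (fun ω => X ω = x ∧ E ω)),
          ∑ ω, (if X ω = x ∧ E ω then Y ω * P ω else 0) := by
    symm
    refine Finset.sum_subset (Finset.filter_subset _ _) fun x _ hx => ?_
    rw [Finset.mem_filter] at hx
    push_neg at hx
    have h0 : pr P (fun ω => X ω = x ∧ E ω) = 0 :=
      le_antisymm (hx (Finset.mem_univ x)) (pr_nonneg P hP _)
    convert num_eq_zero P hP h0 Y using 2 with ω _
    congr 1
  unfold cexp
  rw [hsplit, hfilter, Finset.sum_div]
  refine Finset.sum_congr rfl fun x hx => ?_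
  rw [Finset.mem_filter] at hx
  have hx' := hx.2
  field_simp
end aux

theorem stmt12    {Ω 𝓧 : Type*} [Fintype Ω] [Fintype 𝓧]
    (P : Ω → ℝ) (hP : ∀ ω, 0 ≤ P ω) (hPsum : ∑ ω, P ω = 1)
    (X : Ω → 𝓧) (S : Ω → ℕ) (A : Ω → ℕ) (Y : Ω → ℝ)
    (Y00 Y02 Y10 Y12 : Ω → ℝ)
    (hS1 : 0 < pr P (fun ω => S ω = 1))
    (hcons00 : ∀ ω, S ω = 0 → A ω = 0 → Y00 ω = Y ω)
    (hcons02 : ∀ ω, S ω = 0 → A ω = 2 → Y02 ω = Y ω)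
    (hcons10 : ∀ ω, S ω = 1 → A ω = 0 → Y10 ω = Y ω)
    (hexch10 : ∀ x, 0 < pr P (fun ω => X ω = x ∧ S ω = 1) → cexp P Y10 (fun ω => X ω = x ∧ S ω = 1) = cexp P Y10 (fun ω => X ω = x ∧ S ω = 1 ∧ A ω = 0))
    (hpos0 : ∀ x, 0 < pr P (fun ω => X ω = x ∧ S ω = 1) → 0 < cpr P (fun ω => A ω = 0) (fun ω => X ω = x ∧ S ω = 1))
    (hexch00 : ∀ x, 0 < pr P (fun ω => X ω = x ∧ S ω = 0) → cexp P Y00 (fun ω => X ω = x ∧ S ω = 0) = cexp P Y00 (fun ω => X ω = x ∧ S ω = 0 ∧ A ω = 0))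
    (hexch02 : ∀ x, 0 < pr P (fun ω => X ω = x ∧ S ω = 0) → cexp P Y02 (fun ω => X ω = x ∧ S ω = 0) = cexp P Y02 (fun ω => X ω = x ∧ S ω = 0 ∧ A ω = 2))
    (hposext0 : ∀ x, 0 < pr P (fun ω => X ω = x ∧ S ω = 0) → 0 < cpr P (fun ω => A ω = 0) (fun ω => X ω = x ∧ S ω = 0))
    (hposext2 : ∀ x, 0 < pr P (fun ω => X ω = x ∧ S ω = 0) → 0 < cpr P (fun ω => A ω = 2) (fun ω => X ω = x ∧ S ω = 0))
    (hextpos : ∀ x, 0 < pr P (fun ω => X ω = x ∧ S ω = 1) → 0 < cpr P (fun ω => S ω = 0) (fun ω => X ω = x))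
    (htransdiff : ∀ x, 0 < pr P (fun ω => X ω = x ∧ S ω = 1) → 0 < pr P (fun ω => X ω = x ∧ S ω = 0) →
      cexp P (fun ω => Y02 ω - Y00 ω) (fun ω => X ω = x ∧ S ω = 1) =
      cexp P (fun ω => Y02 ω - Y00 ω) (fun ω => X ω = x ∧ S ω = 0))
    (hnointer : ∀ x, 0 < pr P (fun ω => X ω = x ∧ S ω = 1) → 0 < pr P (fun ω => X ω = x ∧ S ω = 0) →
      cexp P (fun ω => Y12 ω - Y10 ω) (fun ω => X ω = x ∧ S ω = 1) =
      cexp P (fun ω => Y02 ω - Y00 ω) (fun ω => X ω = x ∧ S ω = 1))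
    : cexp P Y12 (fun ω => S ω = 1) =
      (∑ x ∈ univ.filter (fun x => 0 < pr P (fun ω => X ω = x ∧ S ω = 1)),
        cexp P Y (fun ω => X ω = x ∧ S ω = 0 ∧ A ω = 2) * (pr P (fun ω => X ω = x ∧ S ω = 1) / pr P (fun ω => S ω = 1))) +
      ((∑ x ∈ univ.filter (fun x => 0 < pr P (fun ω => X ω = x ∧ S ω = 1)),
        cexp P Y (fun ω => X ω = x ∧ S ω = 1 ∧ A ω = 0) * (pr P (fun ω => X ω = x ∧ S ω = 1) / pr P (fun ω => S ω = 1))) -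
      (∑ x ∈ univ.filter (fun x => 0 < pr P (fun ω => X ω = x ∧ S ω = 1)),
        cexp P Y (fun ω => X ω = x ∧ S ω = 0 ∧ A ω = 0) * (pr P (fun ω => X ω = x ∧ S ω = 1) / pr P (fun ω => S ω = 1)))) := by
  have key : ∀ x ∈ univ.filter (fun x => 0 < pr P (fun ω => X ω = x ∧ S ω = 1)),
      cexp P Y12 (fun ω => X ω = x ∧ S ω = 1)
        = cexp P Y (fun ω => X ω = x ∧ S ω = 0 ∧ A ω = 2)
          + (cexp P Y (fun ω => X ω = x ∧ S ω = 1 ∧ A ω = 0)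
             - cexp P Y (fun ω => X ω = x ∧ S ω = 0 ∧ A ω = 0)) := by
    intro x hx
    rw [Finset.mem_filter] at hx
    have hx1 := hx.2
    have hx0 : 0 < pr P (fun ω => X ω = x ∧ S ω = 0) := by
      have h := pr_pos_of_cpr_pos P hP (hextpos x hx1)
      calc (0:ℝ) < pr P (fun ω => S ω = 0 ∧ X ω = x) := h
        _ = pr P (fun ω => X ω = x ∧ S ω = 0) := pr_congr P (fun ω => and_comm)
    have e1 : cexp P Y12 (fun ω => X ω = x ∧ S ω = 1)
        = cexp P Y10 (fun ω => X ω = x ∧ S ω = 1)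
          + cexp P (fun ω => Y12 ω - Y10 ω) (fun ω => X ω = x ∧ S ω = 1) := by
      rw [cexp_sub]; ring
    rw [e1, hnointer x hx1 hx0, htransdiff x hx1 hx0, cexp_sub,
        hexch10 x hx1, hexch02 x hx0, hexch00 x hx0]
    rw [cexp_congr P Y10 Y (fun ω => Iff.rfl) (fun ω h => hcons10 ω h.2.1 h.2.2),
        cexp_congr P Y02 Y (fun ω => Iff.rfl) (fun ω h => hcons02 ω h.2.1 h.2.2),
        cexp_congr P Y00 Y (fun ω => Iff.rfl) (fun ω h => hcons00 ω h.2.1 h.2.2)]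
    ring
  rw [total_expectation P hP X _ Y12 hS1]
  rw [← Finset.sum_sub_distrib, ← Finset.sum_add_distrib]
  refine Finset.sum_congr rfl fun x hx => ?_
  rw [key x hx]; ring
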